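/- Let n be an integer with n ≥ 5, let K̄ > 0 be a real number, and let x ≥ 0. Then (x/(n−2))·(a(x) + n·K̄) − (x/(n−2) + 4n√n·K̄)·(å(x) + a(x) − n·K̄ − x·å′(x)) < −(2xK̄/(n−2))·(2n√n − n + 2) + 4n√n·(n−8)·K̄², where a(x) = sqrt((x/(n−2) + 4K̄)² + (4n−16)K̄²), å(x) = a(x) − x/n, and å′(x) = (x/(n−2) + 4K̄)/((n−2)·a(x)) − 1/n. -/

import Mathlib

/-- For `n ≥ 5`, `K̄ > 0` and `x ≥ 0`,
`(x/(n−2))·(a + nK̄) − (x/(n−2) + 4n√n·K̄)·(å + a − nK̄ − x·å′)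
  < −(2xK̄/(n−2))·(2n√n − n + 2) + 4n√n·(n−8)·K̄²`. -/
theorem stmt_8 (n : ℕ) (hn : 5 ≤ n) (K x : ℝ) (hK : 0 < K) (hx : 0 ≤ x) :
    x / ((n : ℝ) - 2) *
        (Real.sqrt ((x / ((n : ℝ) - 2) + 4 * K) ^ 2 + (4 * (n : ℝ) - 16) * K ^ 2) + (n : ℝ) * K)
      - (x / ((n : ℝ) - 2) + 4 * (n : ℝ) * Real.sqrt n * K) *
          ((Real.sqrt ((x / ((n : ℝ) - 2) + 4 * K) ^ 2 + (4 * (n : ℝ) - 16) * K ^ 2) - x / n)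
            + Real.sqrt ((x / ((n : ℝ) - 2) + 4 * K) ^ 2 + (4 * (n : ℝ) - 16) * K ^ 2)
            - (n : ℝ) * K
            - x *
              ((x / ((n : ℝ) - 2) + 4 * K) /
                  (((n : ℝ) - 2) *
                    Real.sqrt ((x / ((n : ℝ) - 2) + 4 * K) ^ 2 + (4 * (n : ℝ) - 16) * K ^ 2))
                - 1 / n))
      < -(2 * x * K / ((n : ℝ) - 2)) * (2 * (n : ℝ) * Real.sqrt n - (n : ℝ) + 2)
        + 4 * (n : ℝ) * Real.sqrt n * ((n : ℝ) - 8) * K ^ 2 := by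
  have hn2 : (5:ℝ) ≤ (n:ℝ) := by exact_mod_cast hn
  have hn0 : (0:ℝ) < (n:ℝ) := by linarith
  set m : ℝ := (n:ℝ) - 2 with hm
  have hm0 : (0:ℝ) < m := by simp only [hm]; linarith
  set u : ℝ := x / m with hu_def
  have hu : 0 ≤ u := div_nonneg hx hm0.le
  have hxu : x = u * m := by rw [hu_def, div_mul_cancel₀ x hm0.ne']
  set s : ℝ := Real.sqrt n with hs_def
  have hs0 : 0 < s := Real.sqrt_pos.mpr hn0
  set A : ℝ := Real.sqrt ((u + 4 * K) ^ 2 + (4 * (n:ℝ) - 16) * K ^ 2) with hA_def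
  have hyA : u + 4 * K < A := by
    rw [hA_def]
    rw [show u + 4*K < Real.sqrt ((u + 4 * K) ^ 2 + (4 * (n:ℝ) - 16) * K ^ 2) ↔
      (u + 4*K)^2 < (u + 4 * K) ^ 2 + (4 * (n:ℝ) - 16) * K ^ 2 from
      Real.lt_sqrt (by positivity)]
    nlinarith [sq_nonneg K]
  have hy0 : 0 < u + 4 * K := by positivity
  have hA0 : 0 < A := lt_trans hy0 hyA
  have hrw : x * ((u + 4 * K) / (m * A) - 1 / (n:ℝ))
      = u * ((u + 4 * K) / A) - x / (n:ℝ) := by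
    rw [hxu]
    field_simp
  rw [hrw]
  have hq : u * ((u + 4 * K) / A) ≤ u :=
    mul_le_of_le_one_right hu ((div_le_one hA0).mpr hyA.le)
  have hx2 : -(2 * x * K / m) * (2 * (n:ℝ) * s - (n:ℝ) + 2)
      = -(2 * u * K) * (2 * (n:ℝ) * s - (n:ℝ) + 2) := by rw [hu_def]; ring
  rw [hx2]
  have h1 : 0 ≤ u * (A - (u + 4 * K)) := mul_nonneg hu (sub_nonneg.mpr hyA.le)
  have h2 : 0 < 8 * (n:ℝ) * s * K * (A - (u + 4 * K)) :=
    mul_pos (by positivity) (sub_pos.mpr hyA)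
  have h3 : 0 ≤ (u + 4 * (n:ℝ) * s * K) * (u - u * ((u + 4 * K) / A)) :=
    mul_nonneg (by positivity) (sub_nonneg.mpr hq)
  clear_value m u s A
  nlinarith [h1, h2, h3]
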